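/- For each k ∈ {1,…,n}, the function f_*(z) = (E_n(z)/E_{n−k}(z))^{1/k} tends to zero as z approaches the boundary of the positive cone Γ₊ (within bounded sets): explicitly, f_*(z) ≤ C(n,k) · min_i z_i^{1/k} · (max_i z_i)^{(k−1)/k} for z ∈ Γ₊. -/

import Mathlib

noncomputable section

/-- The positive cone Γ₊ = {x ∈ ℝⁿ : xᵢ > 0}. -/
def PosCone (n : ℕ) : Set (Fin n → ℝ) := {x | ∀ i, 0 < x i}

/-- Normalized k-th elementary symmetric polynomial. -/
def normESymm (n k : ℕ) (x : Fin n → ℝ) : ℝ :=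
  (n.choose k : ℝ)⁻¹ * ∑ t ∈ Finset.powersetCard k (Finset.univ : Finset (Fin n)),
    ∏ i ∈ t, x i

/-- The function f_*(z) = (E_n(z)/E_{n-k}(z))^{1/k} is controlled by
C(n,k) · (min zᵢ)^{1/k} · (max zᵢ)^{(k-1)/k}, hence tends to zero as z approaches
the boundary of Γ₊ within bounded sets. -/
theorem Ek_dual_boundary_estimate
    {n k : ℕ} (hk1 : 1 ≤ k) (hkn : k ≤ n) :
    ∃ C > (0 : ℝ), ∀ z ∈ PosCone n, ∀ i j : Fin n,
      (∀ i', z i ≤ z i') → (∀ j', z j' ≤ z j) →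
      (normESymm n n z / normESymm n (n - k) z) ^ ((1 : ℝ) / k) ≤
        C * (z i) ^ ((1 : ℝ) / k) * (z j) ^ (((k : ℝ) - 1) / k) := by
  have hch : 0 < (n.choose (n - k) : ℝ) := by
    exact_mod_cast Nat.choose_pos (Nat.sub_le n k)
  refine ⟨(n.choose (n - k) : ℝ), hch, ?_⟩
  intro z hz i j hi hj
  have hzpos : ∀ l, 0 < z l := hz
  have hkpos : (0:ℝ) < k := by exact_mod_cast hk1
  -- choose a set T of size k containing i
  obtain ⟨T, hiT, -, hTcard⟩ :=
    Finset.exists_subsuperset_card_eq (t := (Finset.univ : Finset (Fin n)))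
      (Finset.subset_univ {i}) (by simpa using hk1) (by simpa using hkn)
  have hiT' : i ∈ T := hiT (Finset.mem_singleton_self i)
  -- E_n z = product over univ
  have hEn : normESymm n n z = ∏ l, z l := by
    have huniv : Finset.powersetCard n (Finset.univ : Finset (Fin n)) = {Finset.univ} := by
      simpa using Finset.powersetCard_self (Finset.univ : Finset (Fin n))
    rw [normESymm, Nat.choose_self, huniv]
    simp
  -- lower bound on E_{n-k}
  have hcompl : Tᶜ ∈ Finset.powersetCard (n - k) (Finset.univ : Finset (Fin n)) := by
    simp [Finset.mem_powersetCard, Finset.card_compl, hTcard]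
  have hlow : (n.choose (n - k) : ℝ)⁻¹ * ∏ l ∈ Tᶜ, z l ≤ normESymm n (n - k) z := by
    unfold normESymm
    gcongr
    exact Finset.single_le_sum (f := fun t => ∏ l ∈ t, z l)
      (fun t _ => Finset.prod_nonneg fun l _ => (hzpos l).le) hcompl
  have hlowpos : 0 < (n.choose (n - k) : ℝ)⁻¹ * ∏ l ∈ Tᶜ, z l :=
    mul_pos (inv_pos.mpr hch) (Finset.prod_pos fun l _ => hzpos l)
  have hEpos : 0 < normESymm n (n - k) z := lt_of_lt_of_le hlowpos hlow
  -- main product bound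
  have hTprod : ∏ l ∈ T, z l ≤ z i * z j ^ (k - 1) := by
    rw [← Finset.prod_erase_mul T z hiT', mul_comm]
    refine mul_le_mul_of_nonneg_left ?_ (hzpos i).le
    calc ∏ l ∈ T.erase i, z l ≤ ∏ _l ∈ T.erase i, z j :=
          Finset.prod_le_prod (fun l _ => (hzpos l).le) (fun l _ => hj l)
      _ = z j ^ (T.erase i).card := Finset.prod_const _
      _ = z j ^ (k - 1) := by rw [Finset.card_erase_of_mem hiT', hTcard]
  have hdiv : normESymm n n z / normESymm n (n - k) z
      ≤ (n.choose (n - k) : ℝ) * (z i * z j ^ (k - 1)) := by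
    rw [div_le_iff₀ hEpos]
    calc normESymm n n z = (∏ l ∈ T, z l) * ∏ l ∈ Tᶜ, z l := by
          rw [hEn, Finset.prod_mul_prod_compl]
      _ = ((n.choose (n - k) : ℝ) * ∏ l ∈ T, z l) *
            ((n.choose (n - k) : ℝ)⁻¹ * ∏ l ∈ Tᶜ, z l) := by
          rw [mul_mul_mul_comm, mul_inv_cancel₀ hch.ne', one_mul]
      _ ≤ ((n.choose (n - k) : ℝ) * (z i * z j ^ (k - 1))) * normESymm n (n - k) z :=
          mul_le_mul (mul_le_mul_of_nonneg_left hTprod hch.le) hlow hlowpos.le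
            (mul_nonneg hch.le (mul_nonneg (hzpos i).le (pow_nonneg (hzpos j).le _)))
  -- take rpow
  have hdivnn : 0 ≤ normESymm n n z / normESymm n (n - k) z := by
    apply div_nonneg _ hEpos.le
    rw [hEn]; exact Finset.prod_nonneg fun l _ => (hzpos l).le
  have h1 : (normESymm n n z / normESymm n (n - k) z) ^ ((1:ℝ)/k)
      ≤ ((n.choose (n - k) : ℝ) * (z i * z j ^ (k - 1))) ^ ((1:ℝ)/k) :=
    Real.rpow_le_rpow hdivnn hdiv (by positivity)
  refine h1.trans ?_
  have hzj : 0 ≤ z j := (hzpos j).le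
  have hzi : 0 ≤ z i := (hzpos i).le
  rw [Real.mul_rpow hch.le (by positivity), Real.mul_rpow hzi (by positivity),
    ← Real.rpow_natCast (z j) (k - 1), ← Real.rpow_mul hzj]
  have hcast : ((k - 1 : ℕ) : ℝ) * ((1:ℝ)/k) = ((k:ℝ) - 1)/k := by
    rw [Nat.cast_sub hk1]
    field_simp
    norm_num
  rw [hcast, mul_assoc ((n.choose (n - k) : ℝ))]
  refine mul_le_mul_of_nonneg_right ?_ (by positivity)
  calc (n.choose (n - k) : ℝ) ^ ((1:ℝ)/k) ≤ (n.choose (n - k) : ℝ) ^ (1:ℝ) := by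
        apply Real.rpow_le_rpow_of_exponent_le
        · exact_mod_cast Nat.one_le_iff_ne_zero.mpr (Nat.choose_pos (Nat.sub_le n k)).ne'
        · rw [div_le_one hkpos]; exact_mod_cast hk1
    _ = (n.choose (n - k) : ℝ) := Real.rpow_one _
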